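/- arXiv:1902.06844 — 2 statements merged into one kernel-verified Lean document; each statement's English description precedes it below -/
import Mathlib

section
/- (Block-diagonality under path separation) For the multipath signal model with differentiable s and a_m, suppose assumption (As2) holds: for every pair l ≠ l', at least one of (delay separation) s_l^T s_{l'} = ṡ_l^T ṡ_{l'} = ṡ_l^T s_{l'} = s_l^T ṡ_{l'} = 0, or (angle separation) a_l^H a_{l'} = ȧ_{l,φ}^H ȧ_{l',φ} = ȧ_{l,θ}^H ȧ_{l',θ} = ȧ_{l,φ}^H ȧ_{l',θ} = ȧ_{l,θ}^H ȧ_{l',φ} = ȧ_{l,φ}^H a_{l'} = ȧ_{l,θ}^H a_{l'} = a_l^H ȧ_{l',φ} = a_l^H ȧ_{l',θ} = 0. Then every entry of the Fisher information matrix I_ψ coupling a parameter of path l with a parameter of path l' (l ≠ l') is zero; i.e., after grouping the parameters by path, I_ψ is block diagonal with L blocks of size 5×5. -/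
open MeasureTheory ProbabilityTheory Complex Matrix
open scoped Real

noncomputable section

/-- Parameter space `ψ ∈ ℝ^{5L}`: delays `τ`, azimuths `φ`, elevations `θ`,
real gains `α^R`, imaginary gains `α^I`. -/
abbrev PSp (L : ℕ) := (Fin L → ℝ) × (Fin L → ℝ) × (Fin L → ℝ) × (Fin L → ℝ) × (Fin L → ℝ)

/-- Index set for the `5L` real parameters (delays, azimuths, elevations, real
gains, imaginary gains of the `L` paths). -/
abbrev Idx (L : ℕ) := Fin L ⊕ Fin L ⊕ Fin L ⊕ Fin L ⊕ Fin L

/-- Canonical basis direction of parameter `u`. -/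
def basisP {L : ℕ} : Idx L → PSp L
  | Sum.inl l => (Pi.single l 1, 0, 0, 0, 0)
  | Sum.inr (Sum.inl l) => (0, Pi.single l 1, 0, 0, 0)
  | Sum.inr (Sum.inr (Sum.inl l)) => (0, 0, Pi.single l 1, 0, 0)
  | Sum.inr (Sum.inr (Sum.inr (Sum.inl l))) => (0, 0, 0, Pi.single l 1, 0)
  | Sum.inr (Sum.inr (Sum.inr (Sum.inr l))) => (0, 0, 0, 0, Pi.single l 1)

/-- Complex gain `α_l = α_l^R + j α_l^I` of path `l`. -/
def gain {L : ℕ} (ψ : PSp L) (l : Fin L) : ℂ := ψ.2.2.2.1 l + ψ.2.2.2.2 l * Complex.I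

/-- Noiseless received signal `μ_{m,n}(ψ) = Σ_l α_l a_m(φ_l,θ_l) s(nT_s − τ_l)`. -/
def μmodel {L M N : ℕ} (a : Fin M → ℝ × ℝ → ℂ) (s : ℝ → ℝ) (Ts : ℝ)
    (m : Fin M) (n : Fin N) (ψ : PSp L) : ℂ :=
  ∑ l, gain ψ l * a m (ψ.2.1 l, ψ.2.2.1 l) * (s ((n : ℕ) * Ts - ψ.1 l) : ℂ)

/-- Fisher information matrix
`[I_ψ]_{u,v} = (2/σ_w²) Σ_n Σ_m Re{(∂μ_{m,n}/∂ψ_u)^* (∂μ_{m,n}/∂ψ_v)}`. -/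
def Fisher {L M N : ℕ} (a : Fin M → ℝ × ℝ → ℂ) (s : ℝ → ℝ) (Ts σw : ℝ)
    (ψ : PSp L) : Matrix (Idx L) (Idx L) ℝ :=
  Matrix.of fun u v => (2 / σw ^ 2) * ∑ n : Fin N, ∑ m : Fin M,
    ((starRingEnd ℂ) (fderiv ℝ (μmodel a s Ts m n) ψ (basisP u)) *
      fderiv ℝ (μmodel a s Ts m n) ψ (basisP v)).re

/-- Sampled pulse vector `s_l = (s(nT_s − τ_l))_n`. -/
def sV {L : ℕ} (N : ℕ) (s : ℝ → ℝ) (Ts : ℝ) (ψ : PSp L) (l : Fin L) : Fin N → ℝ :=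
  fun n => s ((n : ℕ) * Ts - ψ.1 l)

/-- Sampled pulse-derivative vector `ṡ_l = (ṡ(nT_s − τ_l))_n`. -/
def sdV {L : ℕ} (N : ℕ) (s : ℝ → ℝ) (Ts : ℝ) (ψ : PSp L) (l : Fin L) : Fin N → ℝ :=
  fun n => deriv s ((n : ℕ) * Ts - ψ.1 l)

/-- Array response vector `a_l = (a_m(φ_l,θ_l))_m`. -/
def aV {L M : ℕ} (a : Fin M → ℝ × ℝ → ℂ) (ψ : PSp L) (l : Fin L) : Fin M → ℂ :=
  fun m => a m (ψ.2.1 l, ψ.2.2.1 l)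

/-- Azimuth-derivative array vector `ȧ_{l,φ} = (∂a_m/∂φ(φ_l,θ_l))_m`. -/
def aVφ {L M : ℕ} (a : Fin M → ℝ × ℝ → ℂ) (ψ : PSp L) (l : Fin L) : Fin M → ℂ :=
  fun m => fderiv ℝ (a m) (ψ.2.1 l, ψ.2.2.1 l) (1, 0)

/-- Elevation-derivative array vector `ȧ_{l,θ} = (∂a_m/∂θ(φ_l,θ_l))_m`. -/
def aVθ {L M : ℕ} (a : Fin M → ℝ × ℝ → ℂ) (ψ : PSp L) (l : Fin L) : Fin M → ℂ :=
  fun m => fderiv ℝ (a m) (ψ.2.1 l, ψ.2.2.1 l) (0, 1)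

/-- Hermitian inner product `x^H y = Σ conj(x_i) y_i` of complex vectors. -/
def hip {k : ℕ} (x y : Fin k → ℂ) : ℂ := ∑ i, (starRingEnd ℂ) (x i) * y i

/-- Real inner product `x^T y` of real vectors. -/
def rip {k : ℕ} (x y : Fin k → ℝ) : ℝ := ∑ i, x i * y i

/-- The path to which a parameter index belongs. -/
def pathOf {L : ℕ} : Idx L → Fin L
  | Sum.inl l => l
  | Sum.inr (Sum.inl l) => l
  | Sum.inr (Sum.inr (Sum.inl l)) => l
  | Sum.inr (Sum.inr (Sum.inr (Sum.inl l))) => l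
  | Sum.inr (Sum.inr (Sum.inr (Sum.inr l))) => l


namespace Stmt10Aux

def pτ {L : ℕ} (l : Fin L) : PSp L →L[ℝ] ℝ :=
  (ContinuousLinearMap.proj l).comp (ContinuousLinearMap.fst ℝ _ _)
def pφ {L : ℕ} (l : Fin L) : PSp L →L[ℝ] ℝ :=
  (ContinuousLinearMap.proj l).comp ((ContinuousLinearMap.fst ℝ _ _).comp (ContinuousLinearMap.snd ℝ _ _))
def pθ {L : ℕ} (l : Fin L) : PSp L →L[ℝ] ℝ :=
  (ContinuousLinearMap.proj l).comp ((ContinuousLinearMap.fst ℝ _ _).comp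
    ((ContinuousLinearMap.snd ℝ _ _).comp (ContinuousLinearMap.snd ℝ _ _)))
def pR {L : ℕ} (l : Fin L) : PSp L →L[ℝ] ℝ :=
  (ContinuousLinearMap.proj l).comp ((ContinuousLinearMap.fst ℝ _ _).comp
    ((ContinuousLinearMap.snd ℝ _ _).comp ((ContinuousLinearMap.snd ℝ _ _).comp (ContinuousLinearMap.snd ℝ _ _))))
def pI {L : ℕ} (l : Fin L) : PSp L →L[ℝ] ℝ :=
  (ContinuousLinearMap.proj l).comp ((ContinuousLinearMap.snd ℝ _ _).comp
    ((ContinuousLinearMap.snd ℝ _ _).comp ((ContinuousLinearMap.snd ℝ _ _).comp (ContinuousLinearMap.snd ℝ _ _))))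

@[simp] lemma pτ_apply {L : ℕ} (l : Fin L) (x : PSp L) : pτ l x = x.1 l := rfl
@[simp] lemma pφ_apply {L : ℕ} (l : Fin L) (x : PSp L) : pφ l x = x.2.1 l := rfl
@[simp] lemma pθ_apply {L : ℕ} (l : Fin L) (x : PSp L) : pθ l x = x.2.2.1 l := rfl
@[simp] lemma pR_apply {L : ℕ} (l : Fin L) (x : PSp L) : pR l x = x.2.2.2.1 l := rfl
@[simp] lemma pI_apply {L : ℕ} (l : Fin L) (x : PSp L) : pI l x = x.2.2.2.2 l := rfl

@[simp] lemma mk00 : ((0 : ℝ), (0 : ℝ)) = (0 : ℝ × ℝ) := rfl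

def gc {L : ℕ} (l : Fin L) : PSp L →L[ℝ] ℂ :=
  Complex.ofRealCLM.comp (pR l) + (pI l).smulRight Complex.I

lemma gc_eq {L : ℕ} (l : Fin L) : (fun ψ : PSp L => gain ψ l) = ⇑(gc l) := by
  funext x
  simp [gc, gain, Complex.real_smul]

def cC {L : ℕ} (ψ : PSp L) : Idx L → ℂ
  | Sum.inl l => gain ψ l
  | Sum.inr (Sum.inl l) => gain ψ l
  | Sum.inr (Sum.inr (Sum.inl l)) => gain ψ l
  | Sum.inr (Sum.inr (Sum.inr (Sum.inl _))) => 1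
  | Sum.inr (Sum.inr (Sum.inr (Sum.inr _))) => Complex.I

def gC {L M : ℕ} (a : Fin M → ℝ × ℝ → ℂ) (ψ : PSp L) : Idx L → Fin M → ℂ
  | Sum.inl l => aV a ψ l
  | Sum.inr (Sum.inl l) => aVφ a ψ l
  | Sum.inr (Sum.inr (Sum.inl l)) => aVθ a ψ l
  | Sum.inr (Sum.inr (Sum.inr (Sum.inl l))) => aV a ψ l
  | Sum.inr (Sum.inr (Sum.inr (Sum.inr l))) => aV a ψ l

def fC {L : ℕ} (N : ℕ) (s : ℝ → ℝ) (Ts : ℝ) (ψ : PSp L) : Idx L → Fin N → ℝ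
  | Sum.inl l => fun n => -(sdV N s Ts ψ l n)
  | Sum.inr (Sum.inl l) => sV N s Ts ψ l
  | Sum.inr (Sum.inr (Sum.inl l)) => sV N s Ts ψ l
  | Sum.inr (Sum.inr (Sum.inr (Sum.inl l))) => sV N s Ts ψ l
  | Sum.inr (Sum.inr (Sum.inr (Sum.inr l))) => sV N s Ts ψ l

/-- Full derivative of the `l`-th term of `μmodel`. -/
def Dmap {L M : ℕ} (a : Fin M → ℝ × ℝ → ℂ) (s : ℝ → ℝ) (c : ℝ) (m : Fin M)
    (ψ : PSp L) (l : Fin L) : PSp L →L[ℝ] ℂ :=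
  (gain ψ l * a m (ψ.2.1 l, ψ.2.2.1 l)) •
      (Complex.ofRealCLM.comp ((deriv s (c - ψ.1 l)) • (0 - pτ l)))
    + (s (c - ψ.1 l) : ℂ) •
      (gain ψ l • ((fderiv ℝ (a m) (ψ.2.1 l, ψ.2.2.1 l)).comp ((pφ l).prod (pθ l)))
        + (a m (ψ.2.1 l, ψ.2.2.1 l)) • gc l)

lemma Dmap_apply {L M : ℕ} (a : Fin M → ℝ × ℝ → ℂ) (s : ℝ → ℝ) (c : ℝ) (m : Fin M)
    (ψ : PSp L) (l : Fin L) (x : PSp L) :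
    Dmap a s c m ψ l x =
      gain ψ l * a m (ψ.2.1 l, ψ.2.2.1 l) * ((deriv s (c - ψ.1 l) * (0 - x.1 l) : ℝ) : ℂ)
        + (s (c - ψ.1 l) : ℂ) *
          (gain ψ l * fderiv ℝ (a m) (ψ.2.1 l, ψ.2.2.1 l) (x.2.1 l, x.2.2.1 l)
            + a m (ψ.2.1 l, ψ.2.2.1 l) * ((x.2.2.2.1 l : ℂ) + (x.2.2.2.2 l : ℂ) * Complex.I)) := by
  simp [Dmap, gc, Complex.real_smul, smul_eq_mul, mul_add]
  try ring

lemma hasFDerivAt_mu {L M N : ℕ} (a : Fin M → ℝ × ℝ → ℂ) (s : ℝ → ℝ) (Ts : ℝ)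
    (hs : Differentiable ℝ s) (ha : ∀ m, Differentiable ℝ (a m)) (ψ : PSp L)
    (m : Fin M) (n : Fin N) :
    HasFDerivAt (μmodel a s Ts m n) (∑ l, Dmap a s ((n : ℕ) * Ts) m ψ l) ψ := by
  set c : ℝ := (n : ℕ) * Ts with hc
  refine HasFDerivAt.fun_sum (fun l _ => ?_)
  have h1 : HasFDerivAt (fun ψ' : PSp L => gain ψ' l) (gc l) ψ := by
    rw [gc_eq]; exact (gc l).hasFDerivAt
  have h2 : HasFDerivAt (fun ψ' : PSp L => a m (ψ'.2.1 l, ψ'.2.2.1 l))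
      ((fderiv ℝ (a m) (ψ.2.1 l, ψ.2.2.1 l)).comp ((pφ l).prod (pθ l))) ψ :=
    ((ha m _).hasFDerivAt).comp ψ ((pφ l).prod (pθ l)).hasFDerivAt
  have h3r : HasFDerivAt (fun ψ' : PSp L => s (c - ψ'.1 l))
      ((deriv s (c - ψ.1 l)) • (0 - pτ l)) ψ := by
    have hi : HasFDerivAt (fun ψ' : PSp L => c - ψ'.1 l) (0 - pτ l) ψ :=
      (hasFDerivAt_const c ψ).sub (pτ l).hasFDerivAt
    exact (hs (c - ψ.1 l)).hasDerivAt.comp_hasFDerivAt ψ hi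
  have h3 : HasFDerivAt (fun ψ' : PSp L => (s (c - ψ'.1 l) : ℂ))
      (Complex.ofRealCLM.comp ((deriv s (c - ψ.1 l)) • (0 - pτ l))) ψ :=
    Complex.ofRealCLM.hasFDerivAt.comp ψ h3r
  exact (h1.mul h2).mul h3

lemma key {L M N : ℕ} (a : Fin M → ℝ × ℝ → ℂ) (s : ℝ → ℝ) (Ts : ℝ)
    (hs : Differentiable ℝ s) (ha : ∀ m, Differentiable ℝ (a m)) (ψ : PSp L)
    (m : Fin M) (n : Fin N) (u : Idx L) :
    fderiv ℝ (μmodel a s Ts m n) ψ (basisP u)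
      = cC ψ u * gC a ψ u m * (fC N s Ts ψ u n : ℂ) := by
  rw [(hasFDerivAt_mu a s Ts hs ha ψ m n).fderiv, ContinuousLinearMap.sum_apply]
  rcases u with l' | l' | l' | l' | l'
  · rw [Finset.sum_eq_single l'
      (fun l _ hne => by
        simp [Dmap_apply, basisP, Pi.single_eq_of_ne hne])
      (fun h => absurd (Finset.mem_univ l') h)]
    simp [Dmap_apply, basisP, cC, gC, fC, aV, sdV]
    try push_cast
    try ring
  · rw [Finset.sum_eq_single l'
      (fun l _ hne => by
        simp [Dmap_apply, basisP, Pi.single_eq_of_ne hne])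
      (fun h => absurd (Finset.mem_univ l') h)]
    simp [Dmap_apply, basisP, cC, gC, fC, aV, aVφ, sV]
    try ring
  · rw [Finset.sum_eq_single l'
      (fun l _ hne => by
        simp [Dmap_apply, basisP, Pi.single_eq_of_ne hne])
      (fun h => absurd (Finset.mem_univ l') h)]
    simp [Dmap_apply, basisP, cC, gC, fC, aV, aVθ, sV]
    try ring
  · rw [Finset.sum_eq_single l'
      (fun l _ hne => by
        simp [Dmap_apply, basisP, Pi.single_eq_of_ne hne])
      (fun h => absurd (Finset.mem_univ l') h)]
    simp [Dmap_apply, basisP, cC, gC, fC, aV, sV]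
    try ring
  · rw [Finset.sum_eq_single l'
      (fun l _ hne => by
        simp [Dmap_apply, basisP, Pi.single_eq_of_ne hne])
      (fun h => absurd (Finset.mem_univ l') h)]
    simp [Dmap_apply, basisP, cC, gC, fC, aV, sV]
    try ring

lemma double_factor {M N : ℕ} (K : ℂ) (G : Fin M → ℂ) (F : Fin N → ℂ) :
    ∑ n : Fin N, ∑ m : Fin M, K * G m * F n = K * (∑ m, G m) * (∑ n, F n) := by
  rw [Finset.sum_comm]
  simp only [← Finset.mul_sum, ← Finset.sum_mul]

lemma rip_neg_left {k : ℕ} (x y : Fin k → ℝ) : rip (fun i => -(x i)) y = -(rip x y) := by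
  simp [rip, neg_mul, ← Finset.sum_neg_distrib]

lemma rip_neg_right {k : ℕ} (x y : Fin k → ℝ) : rip x (fun i => -(y i)) = -(rip x y) := by
  simp [rip, mul_neg, ← Finset.sum_neg_distrib]

lemma fact {L M N : ℕ} (a : Fin M → ℝ × ℝ → ℂ) (s : ℝ → ℝ) (Ts : ℝ)
    (ψ : PSp L) (u v : Idx L) :
    ∑ n : Fin N, ∑ m : Fin M,
      (starRingEnd ℂ) (cC ψ u * gC a ψ u m * (fC N s Ts ψ u n : ℂ)) *
        (cC ψ v * gC a ψ v m * (fC N s Ts ψ v n : ℂ))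
    = (starRingEnd ℂ) (cC ψ u) * cC ψ v * hip (gC a ψ u) (gC a ψ v) *
        ((rip (fC N s Ts ψ u) (fC N s Ts ψ v) : ℝ) : ℂ) := by
  have h1 : ∀ (n : Fin N) (m : Fin M),
      (starRingEnd ℂ) (cC ψ u * gC a ψ u m * (fC N s Ts ψ u n : ℂ)) *
        (cC ψ v * gC a ψ v m * (fC N s Ts ψ v n : ℂ))
      = ((starRingEnd ℂ) (cC ψ u) * cC ψ v) *
          ((starRingEnd ℂ) (gC a ψ u m) * gC a ψ v m) *
          ((fC N s Ts ψ u n : ℂ) * (fC N s Ts ψ v n : ℂ)) := by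
    intro n m
    simp only [_root_.map_mul, Complex.conj_ofReal]
    ring
  rw [Finset.sum_congr rfl fun n _ => Finset.sum_congr rfl fun m _ => h1 n m,
    double_factor]
  rw [hip]
  congr 1
  rw [rip]
  push_cast
  rfl

end Stmt10Aux

open Stmt10Aux in

/-- under path separation (As2), every Fisher-information entry
coupling a parameter of path `l` with a parameter of a different path `l'`
vanishes, i.e. `I_ψ` is block diagonal with `L` blocks of size 5×5. -/

theorem stmt_10 {L M N : ℕ} (a : Fin M → ℝ × ℝ → ℂ) (s : ℝ → ℝ) (Ts σw : ℝ)
    (hs : Differentiable ℝ s) (ha : ∀ m, Differentiable ℝ (a m)) (ψ : PSp L)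
    (hAs2 : ∀ l l' : Fin L, l ≠ l' →
      -- separation in delay
      (rip (sV N s Ts ψ l) (sV N s Ts ψ l') = 0 ∧
       rip (sdV N s Ts ψ l) (sdV N s Ts ψ l') = 0 ∧
       rip (sdV N s Ts ψ l) (sV N s Ts ψ l') = 0 ∧
       rip (sV N s Ts ψ l) (sdV N s Ts ψ l') = 0) ∨
      -- separation in azimuth and/or elevation angle
      (hip (aV a ψ l) (aV a ψ l') = 0 ∧
       hip (aVφ a ψ l) (aVφ a ψ l') = 0 ∧
       hip (aVθ a ψ l) (aVθ a ψ l') = 0 ∧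
       hip (aVφ a ψ l) (aVθ a ψ l') = 0 ∧
       hip (aVθ a ψ l) (aVφ a ψ l') = 0 ∧
       hip (aVφ a ψ l) (aV a ψ l') = 0 ∧
       hip (aVθ a ψ l) (aV a ψ l') = 0 ∧
       hip (aV a ψ l) (aVφ a ψ l') = 0 ∧
       hip (aV a ψ l) (aVθ a ψ l') = 0)) :
    ∀ u v : Idx L, pathOf u ≠ pathOf v → Fisher (N := N) a s Ts σw ψ u v = 0 := by
  intro u v huv
  have hz : (∑ n : Fin N, ∑ m : Fin M,
      (starRingEnd ℂ) (fderiv ℝ (μmodel a s Ts m n) ψ (basisP u)) *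
        fderiv ℝ (μmodel a s Ts m n) ψ (basisP v)) = 0 := by
    have hrw : (∑ n : Fin N, ∑ m : Fin M,
        (starRingEnd ℂ) (fderiv ℝ (μmodel a s Ts m n) ψ (basisP u)) *
          fderiv ℝ (μmodel a s Ts m n) ψ (basisP v))
        = (starRingEnd ℂ) (cC ψ u) * cC ψ v * hip (gC a ψ u) (gC a ψ v) *
            ((rip (fC N s Ts ψ u) (fC N s Ts ψ v) : ℝ) : ℂ) := by
      rw [← fact a s Ts ψ u v]
      exact Finset.sum_congr rfl fun n _ => Finset.sum_congr rfl fun m _ => by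
        rw [key a s Ts hs ha ψ m n u, key a s Ts hs ha ψ m n v]
    rw [hrw]
    rcases hAs2 (pathOf u) (pathOf v) huv with ⟨h1, h2, h3, h4⟩ |
        ⟨g1, g2, g3, g4, g5, g6, g7, g8, g9⟩
    · have h0 : rip (fC N s Ts ψ u) (fC N s Ts ψ v) = 0 := by
        rcases u with l1 | l1 | l1 | l1 | l1 <;> rcases v with l2 | l2 | l2 | l2 | l2 <;>
          simp_all [fC, pathOf, rip_neg_left, rip_neg_right]
      rw [h0]
      simp
    · have h0 : hip (gC a ψ u) (gC a ψ v) = 0 := by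
        rcases u with l1 | l1 | l1 | l1 | l1 <;> rcases v with l2 | l2 | l2 | l2 | l2 <;>
          simp_all [gC, pathOf]
      rw [h0]
      simp
  have hre : Fisher (N := N) a s Ts σw ψ u v
      = (2 / σw ^ 2) * (∑ n : Fin N, ∑ m : Fin M,
          (starRingEnd ℂ) (fderiv ℝ (μmodel a s Ts m n) ψ (basisP u)) *
            fderiv ℝ (μmodel a s Ts m n) ψ (basisP v)).re := by
    rw [Fisher, Matrix.of_apply, Complex.re_sum]
    congr 1
    exact Finset.sum_congr rfl fun n _ => (Complex.re_sum _ _).symm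
  rw [hre, hz]
  simp

end
end

section
/- (Corollary 1: simplified lower bound for separated rays) For the multipath signal model, assume: (As2) path separation (for every pair l ≠ l', either s_l^T s_{l'} = ṡ_l^T ṡ_{l'} = ṡ_l^T s_{l'} = s_l^T ṡ_{l'} = 0, or a_l^H a_{l'} = ȧ_{l,φ}^H ȧ_{l',φ} = ȧ_{l,θ}^H ȧ_{l',θ} = ȧ_{l,φ}^H ȧ_{l',θ} = ȧ_{l,θ}^H ȧ_{l',φ} = ȧ_{l,φ}^H a_{l'} = ȧ_{l,θ}^H a_{l'} = a_l^H ȧ_{l',φ} = a_l^H ȧ_{l',θ} = 0); (As3) ȧ_{l,φ}^H a_l = ȧ_{l,θ}^H a_l = 0 for every l; within-path orthogonality ṡ_l^T s_l = 0 and ȧ_{l,φ}^H ȧ_{l,θ} = 0 for every l; for every l: α_l ≠ 0, ‖a_l‖ > 0, ‖ȧ_{l,φ}‖ > 0, ‖ȧ_{l,θ}‖ > 0, and the energy conditions ‖s_l‖² = ‖s‖² > 0 and ‖ṡ_l‖² = ‖ṡ‖² > 0. Then I_ψ is invertible and the lower bound of Theorem 1 averaged over the receive antennas equals LB(f,ψ)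 := (1/M) Σ_{m=1}^M g_{m,f,ψ}^H I_ψ^{−1} g_{m,f,ψ} = (1/SNR) · (L/M) · ( 2 + (1/2)(f/σ_F)² ), where SNR = ‖s‖²/σ_w² and σ_F² = ‖ṡ‖²/((2π)²‖s‖²). In particular LB(f,ψ) does not depend on the path parameters ψ. -/
open MeasureTheory ProbabilityTheory Complex Matrix
open scoped Real

noncomputable section

/-- Gradient vector `g_{m,f,ψ}` of the channel frequency response
`H_m(f,ψ) = Σ_l α_l a_m(φ_l,θ_l) e^{−j2πfτ_l}` with respect to the 5L parameters. -/
def gVec {L M : ℕ} (a : Fin M → ℝ × ℝ → ℂ) (f : ℝ) (ψ : PSp L) (m : Fin M) : Idx L → ℂ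
  | Sum.inl l => -(Complex.I * (2 * π * f)) * gain ψ l * a m (ψ.2.1 l, ψ.2.2.1 l) *
      Complex.exp (-(Complex.I * (2 * π * f * ψ.1 l)))
  | Sum.inr (Sum.inl l) => gain ψ l * fderiv ℝ (a m) (ψ.2.1 l, ψ.2.2.1 l) (1, 0) *
      Complex.exp (-(Complex.I * (2 * π * f * ψ.1 l)))
  | Sum.inr (Sum.inr (Sum.inl l)) => gain ψ l * fderiv ℝ (a m) (ψ.2.1 l, ψ.2.2.1 l) (0, 1) *
      Complex.exp (-(Complex.I * (2 * π * f * ψ.1 l)))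
  | Sum.inr (Sum.inr (Sum.inr (Sum.inl l))) => a m (ψ.2.1 l, ψ.2.2.1 l) *
      Complex.exp (-(Complex.I * (2 * π * f * ψ.1 l)))
  | Sum.inr (Sum.inr (Sum.inr (Sum.inr l))) => Complex.I * a m (ψ.2.1 l, ψ.2.2.1 l) *
      Complex.exp (-(Complex.I * (2 * π * f * ψ.1 l)))


-- ===== auxiliary machinery =====

def π1 (L : ℕ) (l : Fin L) : PSp L →L[ℝ] ℝ :=
  (ContinuousLinearMap.proj l).comp (ContinuousLinearMap.fst ℝ _ _)
def π2 (L : ℕ) (l : Fin L) : PSp L →L[ℝ] ℝ :=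
  (ContinuousLinearMap.proj l).comp ((ContinuousLinearMap.fst ℝ _ _).comp (ContinuousLinearMap.snd ℝ _ _))
def π3 (L : ℕ) (l : Fin L) : PSp L →L[ℝ] ℝ :=
  (ContinuousLinearMap.proj l).comp ((ContinuousLinearMap.fst ℝ _ _).comp ((ContinuousLinearMap.snd ℝ _ _).comp (ContinuousLinearMap.snd ℝ _ _)))
def π4 (L : ℕ) (l : Fin L) : PSp L →L[ℝ] ℝ :=
  (ContinuousLinearMap.proj l).comp ((ContinuousLinearMap.fst ℝ _ _).comp ((ContinuousLinearMap.snd ℝ _ _).comp ((ContinuousLinearMap.snd ℝ _ _).comp (ContinuousLinearMap.snd ℝ _ _))))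
def π5 (L : ℕ) (l : Fin L) : PSp L →L[ℝ] ℝ :=
  (ContinuousLinearMap.proj l).comp ((ContinuousLinearMap.snd ℝ _ _).comp ((ContinuousLinearMap.snd ℝ _ _).comp ((ContinuousLinearMap.snd ℝ _ _).comp (ContinuousLinearMap.snd ℝ _ _))))

variable {L M N : ℕ}

@[simp] lemma π1_apply (l : Fin L) (e : PSp L) : π1 L l e = e.1 l := rfl
@[simp] lemma π2_apply (l : Fin L) (e : PSp L) : π2 L l e = e.2.1 l := rfl
@[simp] lemma π3_apply (l : Fin L) (e : PSp L) : π3 L l e = e.2.2.1 l := rfl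
@[simp] lemma π4_apply (l : Fin L) (e : PSp L) : π4 L l e = e.2.2.2.1 l := rfl
@[simp] lemma π5_apply (l : Fin L) (e : PSp L) : π5 L l e = e.2.2.2.2 l := rfl

def gainCLM (L : ℕ) (l : Fin L) : PSp L →L[ℝ] ℂ := (π4 L l).smulRight 1 + (π5 L l).smulRight Complex.I

lemma hasFDerivAt_gain (l : Fin L) (ψ : PSp L) :
    HasFDerivAt (fun ψ' : PSp L => gain ψ' l) (gainCLM L l) ψ := by
  have h : (fun ψ' : PSp L => gain ψ' l) = ⇑(gainCLM L l) := by
    funext ψ'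
    simp [gain, gainCLM, Complex.real_smul]
  rw [h]
  exact (gainCLM L l).hasFDerivAt

def dirCLM (L : ℕ) (l : Fin L) : PSp L →L[ℝ] ℝ × ℝ := (π2 L l).prod (π3 L l)

@[simp] lemma dirCLM_apply (l : Fin L) (e : PSp L) : dirCLM L l e = (e.2.1 l, e.2.2.1 l) := rfl

lemma hasFDerivAt_a (am : ℝ × ℝ → ℂ) (ham : Differentiable ℝ am) (l : Fin L) (ψ : PSp L) :
    HasFDerivAt (fun ψ' : PSp L => am (ψ'.2.1 l, ψ'.2.2.1 l))
      ((fderiv ℝ am (ψ.2.1 l, ψ.2.2.1 l)).comp (dirCLM L l)) ψ :=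
  (ham _).hasFDerivAt.comp ψ ((dirCLM L l).hasFDerivAt)

lemma hasFDerivAt_sPart (s : ℝ → ℝ) (hs : Differentiable ℝ s) (c : ℝ) (l : Fin L) (ψ : PSp L) :
    HasFDerivAt (fun ψ' : PSp L => ((s (c - ψ'.1 l) : ℝ) : ℂ))
      (Complex.ofRealCLM.comp ((ContinuousLinearMap.smulRight (1 : ℝ →L[ℝ] ℝ) (deriv s (c - ψ.1 l))).comp (-(π1 L l)))) ψ := by
  have h1 : HasFDerivAt (fun ψ' : PSp L => c - ψ'.1 l) (-(π1 L l)) ψ :=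
    (π1 L l).hasFDerivAt.const_sub c
  have h2 := ((hs (c - ψ.1 l)).hasDerivAt.hasFDerivAt)
  exact Complex.ofRealCLM.hasFDerivAt.comp ψ (h2.comp ψ h1)

def Dval {L M : ℕ} (a : Fin M → ℝ × ℝ → ℂ) (s : ℝ → ℝ) (c : ℝ) (ψ : PSp L) (m : Fin M) :
    Idx L → ℂ
  | Sum.inl l => -(gain ψ l * a m (ψ.2.1 l, ψ.2.2.1 l) * ((deriv s (c - ψ.1 l) : ℝ) : ℂ))
  | Sum.inr (Sum.inl l) => gain ψ l * (fderiv ℝ (a m) (ψ.2.1 l, ψ.2.2.1 l) (1, 0)) * (s (c - ψ.1 l) : ℂ)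
  | Sum.inr (Sum.inr (Sum.inl l)) => gain ψ l * (fderiv ℝ (a m) (ψ.2.1 l, ψ.2.2.1 l) (0, 1)) * (s (c - ψ.1 l) : ℂ)
  | Sum.inr (Sum.inr (Sum.inr (Sum.inl l))) => a m (ψ.2.1 l, ψ.2.2.1 l) * (s (c - ψ.1 l) : ℂ)
  | Sum.inr (Sum.inr (Sum.inr (Sum.inr l))) => Complex.I * a m (ψ.2.1 l, ψ.2.2.1 l) * (s (c - ψ.1 l) : ℂ)

set_option maxHeartbeats 1000000 in
lemma fderiv_μ (a : Fin M → ℝ × ℝ → ℂ) (s : ℝ → ℝ) (Ts : ℝ)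
    (hs : Differentiable ℝ s) (ha : ∀ m, Differentiable ℝ (a m)) (ψ : PSp L)
    (m : Fin M) (n : Fin N) (u : Idx L) :
    fderiv ℝ (μmodel a s Ts m n) ψ (basisP u) = Dval a s ((n : ℕ) * Ts) ψ m u := by
  set c : ℝ := (n : ℕ) * Ts with hc
  set D : Fin L → (PSp L →L[ℝ] ℂ) := fun l =>
    (gain ψ l * a m (ψ.2.1 l, ψ.2.2.1 l)) •
      (Complex.ofRealCLM.comp ((ContinuousLinearMap.smulRight (1 : ℝ →L[ℝ] ℝ) (deriv s (c - ψ.1 l))).comp (-(π1 L l)))) +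
    ((s (c - ψ.1 l) : ℝ) : ℂ) •
      (gain ψ l • ((fderiv ℝ (a m) (ψ.2.1 l, ψ.2.2.1 l)).comp (dirCLM L l)) +
        a m (ψ.2.1 l, ψ.2.2.1 l) • gainCLM L l) with hD
  have hl : ∀ l : Fin L,
      HasFDerivAt (fun ψ' : PSp L => gain ψ' l * a m (ψ'.2.1 l, ψ'.2.2.1 l) * (s (c - ψ'.1 l) : ℂ)) (D l) ψ :=
    fun l => ((hasFDerivAt_gain l ψ).mul (hasFDerivAt_a (a m) (ha m) l ψ)).mul
      (hasFDerivAt_sPart s hs c l ψ)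
  have hμ : HasFDerivAt (μmodel a s Ts m n) (∑ l, D l) ψ := by
    unfold μmodel
    exact HasFDerivAt.fun_sum (fun l _ => hl l)
  rw [hμ.fderiv, ContinuousLinearMap.sum_apply]
  rcases u with l' | l' | l' | l' | l'
  all_goals {
    rw [Finset.sum_eq_single l' ?_ (by simp)]
    · simp [hD, Dval, basisP, gainCLM, ContinuousLinearMap.smulRight_apply, Complex.real_smul,
        Prod.mk_zero_zero]
      try ring
    · intro l _ hll
      simp [hD, basisP, gainCLM, ContinuousLinearMap.smulRight_apply,
        Pi.single_apply, hll, Ne.symm hll, Prod.mk_zero_zero]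
  }

/-- constant (gain-type) factor -/
def cstP {L : ℕ} (ψ : PSp L) : Idx L → ℂ
  | Sum.inl l => -(gain ψ l)
  | Sum.inr (Sum.inl l) => gain ψ l
  | Sum.inr (Sum.inr (Sum.inl l)) => gain ψ l
  | Sum.inr (Sum.inr (Sum.inr (Sum.inl _))) => 1
  | Sum.inr (Sum.inr (Sum.inr (Sum.inr _))) => Complex.I

/-- antenna-vector factor -/
def bVP {L M : ℕ} (a : Fin M → ℝ × ℝ → ℂ) (ψ : PSp L) : Idx L → Fin M → ℂ
  | Sum.inl l => aV a ψ l
  | Sum.inr (Sum.inl l) => aVφ a ψ l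
  | Sum.inr (Sum.inr (Sum.inl l)) => aVθ a ψ l
  | Sum.inr (Sum.inr (Sum.inr (Sum.inl l))) => aV a ψ l
  | Sum.inr (Sum.inr (Sum.inr (Sum.inr l))) => aV a ψ l

/-- signal-vector factor -/
def pvec {L : ℕ} (N : ℕ) (s : ℝ → ℝ) (Ts : ℝ) (ψ : PSp L) : Idx L → Fin N → ℝ
  | Sum.inl l => sdV N s Ts ψ l
  | Sum.inr (Sum.inl l) => sV N s Ts ψ l
  | Sum.inr (Sum.inr (Sum.inl l)) => sV N s Ts ψ l
  | Sum.inr (Sum.inr (Sum.inr (Sum.inl l))) => sV N s Ts ψ l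
  | Sum.inr (Sum.inr (Sum.inr (Sum.inr l))) => sV N s Ts ψ l

lemma Dval_eq (a : Fin M → ℝ × ℝ → ℂ) (s : ℝ → ℝ) (Ts : ℝ) (ψ : PSp L)
    (m : Fin M) (n : Fin N) (u : Idx L) :
    Dval a s ((n : ℕ) * Ts) ψ m u = cstP ψ u * bVP a ψ u m * ((pvec N s Ts ψ u n : ℝ) : ℂ) := by
  rcases u with l | l | l | l | l <;>
    simp [Dval, cstP, bVP, pvec, aV, aVφ, aVθ, sV, sdV] <;> ring

lemma fisher_entry (a : Fin M → ℝ × ℝ → ℂ) (s : ℝ → ℝ) (Ts σw : ℝ)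
    (hs : Differentiable ℝ s) (ha : ∀ m, Differentiable ℝ (a m)) (ψ : PSp L) (u v : Idx L) :
    Fisher (N := N) a s Ts σw ψ u v =
      (2 / σw ^ 2) * (((starRingEnd ℂ) (cstP ψ u) * cstP ψ v *
        hip (bVP a ψ u) (bVP a ψ v)).re * rip (pvec N s Ts ψ u) (pvec N s Ts ψ v)) := by
  unfold Fisher
  rw [Matrix.of_apply]
  congr 1
  have hterm : ∀ (n : Fin N) (m : Fin M),
      ((starRingEnd ℂ) (fderiv ℝ (μmodel a s Ts m n) ψ (basisP u)) *
        fderiv ℝ (μmodel a s Ts m n) ψ (basisP v)).re =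
      ((starRingEnd ℂ) (cstP ψ u) * cstP ψ v *
        ((starRingEnd ℂ) (bVP a ψ u m) * bVP a ψ v m)).re *
      (pvec N s Ts ψ u n * pvec N s Ts ψ v n) := by
    intro n m
    rw [fderiv_μ a s Ts hs ha ψ m n u, fderiv_μ a s Ts hs ha ψ m n v,
      Dval_eq, Dval_eq]
    have : (starRingEnd ℂ) (cstP ψ u * bVP a ψ u m * ((pvec N s Ts ψ u n : ℝ) : ℂ)) *
        (cstP ψ v * bVP a ψ v m * ((pvec N s Ts ψ v n : ℝ) : ℂ)) =
        ((pvec N s Ts ψ u n * pvec N s Ts ψ v n : ℝ) : ℂ) *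
        ((starRingEnd ℂ) (cstP ψ u) * cstP ψ v *
          ((starRingEnd ℂ) (bVP a ψ u m) * bVP a ψ v m)) := by
      simp only [_root_.map_mul, Complex.conj_ofReal, Complex.ofReal_mul]
      ring
    rw [this, Complex.re_ofReal_mul]
    ring
  simp only [hterm]
  rw [Finset.sum_comm]
  rw [hip, Finset.mul_sum, Complex.re_sum, rip, Finset.sum_mul]
  exact Finset.sum_congr rfl fun m _ => (Finset.mul_sum _ _ _).symm


lemma rip_comm {k : ℕ} (x y : Fin k → ℝ) : rip x y = rip y x := by
  simp [rip, mul_comm]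

lemma hip_conj_zero {k : ℕ} {x y : Fin k → ℂ} (h : hip x y = 0) : hip y x = 0 := by
  have : hip y x = (starRingEnd ℂ) (hip x y) := by
    simp only [hip, map_sum, _root_.map_mul, Complex.conj_conj]
    exact Finset.sum_congr rfl fun i _ => mul_comm _ _
  rw [this, h, map_zero]

lemma hip_self {k : ℕ} (x : Fin k → ℂ) :
    hip x x = ((∑ i, Complex.normSq (x i) : ℝ) : ℂ) := by
  simp only [hip, Complex.ofReal_sum]
  exact Finset.sum_congr rfl fun i _ => (Complex.normSq_eq_conj_mul_self).symm

/-- The diagonal of the Fisher matrix under the separation assumptions. -/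
def dP {L M : ℕ} (a : Fin M → ℝ × ℝ → ℂ) (σw : ℝ) (ψ : PSp L) (S2 Sd2 : ℝ) : Idx L → ℝ
  | Sum.inl l => (2 / σw ^ 2) * (Complex.normSq (gain ψ l) * (∑ m, Complex.normSq (aV a ψ l m)) * Sd2)
  | Sum.inr (Sum.inl l) => (2 / σw ^ 2) * (Complex.normSq (gain ψ l) * (∑ m, Complex.normSq (aVφ a ψ l m)) * S2)
  | Sum.inr (Sum.inr (Sum.inl l)) => (2 / σw ^ 2) * (Complex.normSq (gain ψ l) * (∑ m, Complex.normSq (aVθ a ψ l m)) * S2)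
  | Sum.inr (Sum.inr (Sum.inr (Sum.inl l))) => (2 / σw ^ 2) * ((∑ m, Complex.normSq (aV a ψ l m)) * S2)
  | Sum.inr (Sum.inr (Sum.inr (Sum.inr l))) => (2 / σw ^ 2) * ((∑ m, Complex.normSq (aV a ψ l m)) * S2)

set_option maxHeartbeats 2000000 in
lemma fisher_diag (a : Fin M → ℝ × ℝ → ℂ) (s : ℝ → ℝ) (Ts σw : ℝ)
    (hs : Differentiable ℝ s) (ha : ∀ m, Differentiable ℝ (a m)) (ψ : PSp L)
    (hAs2 : ∀ l l' : Fin L, l ≠ l' →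
      (rip (sV N s Ts ψ l) (sV N s Ts ψ l') = 0 ∧
       rip (sdV N s Ts ψ l) (sdV N s Ts ψ l') = 0 ∧
       rip (sdV N s Ts ψ l) (sV N s Ts ψ l') = 0 ∧
       rip (sV N s Ts ψ l) (sdV N s Ts ψ l') = 0) ∨
      (hip (aV a ψ l) (aV a ψ l') = 0 ∧
       hip (aVφ a ψ l) (aVφ a ψ l') = 0 ∧
       hip (aVθ a ψ l) (aVθ a ψ l') = 0 ∧
       hip (aVφ a ψ l) (aVθ a ψ l') = 0 ∧
       hip (aVθ a ψ l) (aVφ a ψ l') = 0 ∧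
       hip (aVφ a ψ l) (aV a ψ l') = 0 ∧
       hip (aVθ a ψ l) (aV a ψ l') = 0 ∧
       hip (aV a ψ l) (aVφ a ψ l') = 0 ∧
       hip (aV a ψ l) (aVθ a ψ l') = 0))
    (hAs3 : ∀ l, hip (aVφ a ψ l) (aV a ψ l) = 0 ∧ hip (aVθ a ψ l) (aV a ψ l) = 0)
    (horth : ∀ l, rip (sdV N s Ts ψ l) (sV N s Ts ψ l) = 0 ∧ hip (aVφ a ψ l) (aVθ a ψ l) = 0)
    (Snorm2 Sdnorm2 : ℝ)
    (hEs : ∀ l, rip (sV N s Ts ψ l) (sV N s Ts ψ l) = Snorm2)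
    (hEsd : ∀ l, rip (sdV N s Ts ψ l) (sdV N s Ts ψ l) = Sdnorm2) :
    Fisher (N := N) a s Ts σw ψ = Matrix.diagonal (dP a σw ψ Snorm2 Sdnorm2) := by
  ext u v
  rw [fisher_entry a s Ts σw hs ha ψ u v]
  by_cases huv : u = v
  · subst huv
    rw [Matrix.diagonal_apply_eq]
    rcases u with l | l | l | l | l <;>
      simp only [cstP, bVP, pvec, dP] <;>
      rw [hip_self] <;>
      simp only [hEs l, hEsd l, Complex.mul_re, Complex.mul_im, Complex.conj_re,
        Complex.conj_im, Complex.ofReal_re, Complex.ofReal_im, Complex.normSq_apply,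
        Complex.I_re, Complex.I_im, Complex.neg_re, Complex.neg_im, Complex.one_re,
        Complex.one_im] <;>
      ring
  · rw [Matrix.diagonal_apply_ne _ huv]
    have key : ∀ (l l' : Fin L), l ≠ l' →
        (rip (sV N s Ts ψ l) (sV N s Ts ψ l') = 0 ∧
         rip (sdV N s Ts ψ l) (sdV N s Ts ψ l') = 0 ∧
         rip (sdV N s Ts ψ l) (sV N s Ts ψ l') = 0 ∧
         rip (sV N s Ts ψ l) (sdV N s Ts ψ l') = 0) ∨
        (hip (aV a ψ l) (aV a ψ l') = 0 ∧
         hip (aVφ a ψ l) (aVφ a ψ l') = 0 ∧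
         hip (aVθ a ψ l) (aVθ a ψ l') = 0 ∧
         hip (aVφ a ψ l) (aVθ a ψ l') = 0 ∧
         hip (aVθ a ψ l) (aVφ a ψ l') = 0 ∧
         hip (aVφ a ψ l) (aV a ψ l') = 0 ∧
         hip (aVθ a ψ l) (aV a ψ l') = 0 ∧
         hip (aV a ψ l) (aVφ a ψ l') = 0 ∧
         hip (aV a ψ l) (aVθ a ψ l') = 0) := hAs2
    rcases u with l | l | l | l | l <;> rcases v with l' | l' | l' | l' | l' <;>
      simp only [cstP, bVP, pvec] <;>
      rcases eq_or_ne l l' with rfl | hne <;>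
      first
        | exact absurd rfl huv
        | (have h1 := (horth l).1
           have h1' : rip (sV N s Ts ψ l) (sdV N s Ts ψ l) = 0 := by rw [rip_comm]; exact h1
           have h2 := (horth l).2
           have h2' := hip_conj_zero h2
           have h3 := (hAs3 l).1
           have h3' := hip_conj_zero h3
           have h4 := (hAs3 l).2
           have h4' := hip_conj_zero h4
           simp [h1, h1', h2, h2', h3, h3', h4, h4', hip_self, Complex.mul_re]
           done)
        | (rcases key l l' hne with ⟨q1, q2, q3, q4⟩ | ⟨p1, p2, p3, p4, p5, p6, p7, p8, p9⟩ <;>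
            first
              | (simp [q1, q2, q3, q4]; done)
              | (simp [p1, p2, p3, p4, p5, p6, p7, p8, p9]; done))

/-- Corollary 1: under (As2), (As3), within-path orthogonality and
the energy conditions, the Fisher matrix is invertible and the lower bound of
Theorem 1 averaged over the receive antennas equals
`(1/SNR)·(L/M)·(2 + (1/2)(f/σ_F)²)`; in particular it does not depend on `ψ`. -/
theorem stmt_13 {L M N : ℕ} (a : Fin M → ℝ × ℝ → ℂ) (s : ℝ → ℝ) (Ts σw f : ℝ)
    (hs : Differentiable ℝ s) (ha : ∀ m, Differentiable ℝ (a m)) (ψ : PSp L)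
    -- (As2): path separation
    (hAs2 : ∀ l l' : Fin L, l ≠ l' →
      (rip (sV N s Ts ψ l) (sV N s Ts ψ l') = 0 ∧
       rip (sdV N s Ts ψ l) (sdV N s Ts ψ l') = 0 ∧
       rip (sdV N s Ts ψ l) (sV N s Ts ψ l') = 0 ∧
       rip (sV N s Ts ψ l) (sdV N s Ts ψ l') = 0) ∨
      (hip (aV a ψ l) (aV a ψ l') = 0 ∧
       hip (aVφ a ψ l) (aVφ a ψ l') = 0 ∧
       hip (aVθ a ψ l) (aVθ a ψ l') = 0 ∧
       hip (aVφ a ψ l) (aVθ a ψ l') = 0 ∧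
       hip (aVθ a ψ l) (aVφ a ψ l') = 0 ∧
       hip (aVφ a ψ l) (aV a ψ l') = 0 ∧
       hip (aVθ a ψ l) (aV a ψ l') = 0 ∧
       hip (aV a ψ l) (aVφ a ψ l') = 0 ∧
       hip (aV a ψ l) (aVθ a ψ l') = 0))
    -- (As3)
    (hAs3 : ∀ l, hip (aVφ a ψ l) (aV a ψ l) = 0 ∧ hip (aVθ a ψ l) (aV a ψ l) = 0)
    -- within-path orthogonality
    (horth : ∀ l, rip (sdV N s Ts ψ l) (sV N s Ts ψ l) = 0 ∧ hip (aVφ a ψ l) (aVθ a ψ l) = 0)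
    -- nondegeneracy of the paths
    (hα : ∀ l, gain ψ l ≠ 0)
    (haN : ∀ l, 0 < ∑ m, Complex.normSq (aV a ψ l m))
    (haNφ : ∀ l, 0 < ∑ m, Complex.normSq (aVφ a ψ l m))
    (haNθ : ∀ l, 0 < ∑ m, Complex.normSq (aVθ a ψ l m))
    -- energy conditions ‖s_l‖² = ‖s‖² > 0 and ‖ṡ_l‖² = ‖ṡ‖² > 0
    (Snorm2 Sdnorm2 : ℝ)
    (hSn : Snorm2 = ∑ n : Fin N, s ((n : ℕ) * Ts) ^ 2)
    (hSdn : Sdnorm2 = ∑ n : Fin N, deriv s ((n : ℕ) * Ts) ^ 2)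
    (hEs : ∀ l, rip (sV N s Ts ψ l) (sV N s Ts ψ l) = Snorm2)
    (hEsd : ∀ l, rip (sdV N s Ts ψ l) (sdV N s Ts ψ l) = Sdnorm2)
    (hSpos : 0 < Snorm2) (hSdpos : 0 < Sdnorm2)
    (hσ : σw ≠ 0) (hM : 0 < M)
    -- SNR and mean squared bandwidth σ_F²
    (SNR σF2 : ℝ) (hSNR : SNR = Snorm2 / σw ^ 2) (hσF2 : σF2 = Sdnorm2 / ((2 * π) ^ 2 * Snorm2)) :
    IsUnit (Fisher (N := N) a s Ts σw ψ).det ∧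
    (1 / (M : ℝ)) * ∑ m : Fin M,
        (∑ u : Idx L, ∑ v : Idx L,
          (starRingEnd ℂ) (gVec a f ψ m u) *
            (((Fisher (N := N) a s Ts σw ψ)⁻¹ u v : ℝ) : ℂ) * gVec a f ψ m v).re =
      (1 / SNR) * ((L : ℝ) / (M : ℝ)) * (2 + (1 / 2) * (f ^ 2 / σF2)) := by
  have hσ2 : σw ^ 2 ≠ 0 := pow_ne_zero 2 hσ
  have h2pos : (0:ℝ) < 2 / σw ^ 2 := by positivity
  have hdiag := fisher_diag a s Ts σw hs ha ψ hAs2 hAs3 horth Snorm2 Sdnorm2 hEs hEsd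
  set d : Idx L → ℝ := dP a σw ψ Snorm2 Sdnorm2 with hd
  have hdpos : ∀ u, 0 < d u := by
    intro u
    rcases u with l | l | l | l | l
    · exact mul_pos h2pos (mul_pos (mul_pos (Complex.normSq_pos.mpr (hα l)) (haN l)) hSdpos)
    · exact mul_pos h2pos (mul_pos (mul_pos (Complex.normSq_pos.mpr (hα l)) (haNφ l)) hSpos)
    · exact mul_pos h2pos (mul_pos (mul_pos (Complex.normSq_pos.mpr (hα l)) (haNθ l)) hSpos)
    · exact mul_pos h2pos (mul_pos (haN l) hSpos)
    · exact mul_pos h2pos (mul_pos (haN l) hSpos)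
  have hdne : ∀ u, d u ≠ 0 := fun u => (hdpos u).ne'
  constructor
  · rw [hdiag, Matrix.det_diagonal]
    exact isUnit_iff_ne_zero.mpr (Finset.prod_ne_zero_iff.mpr fun u _ => hdne u)
  have hinv : (Fisher (N := N) a s Ts σw ψ)⁻¹ = Matrix.diagonal (fun u => (d u)⁻¹) := by
    rw [hdiag]
    apply Matrix.inv_eq_right_inv
    rw [Matrix.diagonal_mul_diagonal]
    have h1 : (fun u => d u * (d u)⁻¹) = fun _ => (1:ℝ) :=
      funext fun u => mul_inv_cancel₀ (hdne u)
    rw [h1, Matrix.diagonal_one]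
  rw [hinv]
  have hsum1 : ∀ m : Fin M,
      (∑ u : Idx L, ∑ v : Idx L,
        (starRingEnd ℂ) (gVec a f ψ m u) *
          (((Matrix.diagonal (fun w => (d w)⁻¹) u v : ℝ) : ℂ)) * gVec a f ψ m v).re =
      ∑ u : Idx L, (d u)⁻¹ * Complex.normSq (gVec a f ψ m u) := by
    intro m
    have hterm : ∀ u v : Idx L,
        (starRingEnd ℂ) (gVec a f ψ m u) *
          (((Matrix.diagonal (fun w => (d w)⁻¹) u v : ℝ) : ℂ)) * gVec a f ψ m v =
        if v = u then ((((d u)⁻¹ * Complex.normSq (gVec a f ψ m u)) : ℝ) : ℂ) else 0 := by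
      intro u v
      rcases eq_or_ne v u with rfl | hvu
      · rw [if_pos rfl, Matrix.diagonal_apply_eq]
        rw [Complex.ofReal_mul, mul_comm ((starRingEnd ℂ) (gVec a f ψ m v)) _, mul_assoc,
          ← Complex.normSq_eq_conj_mul_self]
      · rw [if_neg hvu, Matrix.diagonal_apply_ne _ (Ne.symm hvu)]
        simp
    simp only [hterm]
    simp [Finset.sum_ite_eq', Complex.re_sum]
  simp only [hsum1]
  rw [Finset.sum_comm]
  -- norms of the gradient entries
  have hE : ∀ l : Fin L,
      Complex.normSq (Complex.exp (-(Complex.I * (2 * π * f * ψ.1 l)))) = 1 := by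
    intro l
    rw [Complex.normSq_eq_norm_sq, Complex.norm_exp]
    have : (-(Complex.I * (2 * π * f * (ψ.1 l : ℂ)))).re = 0 := by
      simp [Complex.mul_re]
    rw [this]
    simp
  have hgτ : ∀ (m : Fin M) (l : Fin L),
      Complex.normSq (gVec a f ψ m (Sum.inl l)) =
        ((2 * π * f) ^ 2 * Complex.normSq (gain ψ l)) * Complex.normSq (aV a ψ l m) := by
    intro m l
    simp only [gVec, Complex.normSq_mul, Complex.normSq_neg, hE l, mul_one]
    have h2 : Complex.normSq (2 : ℂ) = 4 := by
      rw [show (2:ℂ) = ((2:ℝ):ℂ) by norm_num, Complex.normSq_ofReal]; norm_num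
    simp [aV, Complex.normSq_I, Complex.normSq_ofReal, h2]
    try ring
    try tauto
  have hgφ : ∀ (m : Fin M) (l : Fin L),
      Complex.normSq (gVec a f ψ m (Sum.inr (Sum.inl l))) =
        Complex.normSq (gain ψ l) * Complex.normSq (aVφ a ψ l m) := by
    intro m l
    simp only [gVec, Complex.normSq_mul, hE l, mul_one]
    simp [aVφ]
  have hgθ : ∀ (m : Fin M) (l : Fin L),
      Complex.normSq (gVec a f ψ m (Sum.inr (Sum.inr (Sum.inl l)))) =
        Complex.normSq (gain ψ l) * Complex.normSq (aVθ a ψ l m) := by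
    intro m l
    simp only [gVec, Complex.normSq_mul, hE l, mul_one]
    simp [aVθ]
  have hgR : ∀ (m : Fin M) (l : Fin L),
      Complex.normSq (gVec a f ψ m (Sum.inr (Sum.inr (Sum.inr (Sum.inl l))))) =
        Complex.normSq (aV a ψ l m) := by
    intro m l
    simp only [gVec, Complex.normSq_mul, hE l, mul_one]
    simp [aV]
  have hgI : ∀ (m : Fin M) (l : Fin L),
      Complex.normSq (gVec a f ψ m (Sum.inr (Sum.inr (Sum.inr (Sum.inr l))))) =
        Complex.normSq (aV a ψ l m) := by
    intro m l
    simp only [gVec, Complex.normSq_mul, hE l, mul_one, Complex.normSq_I]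
    simp [aV]
  -- per-path block values
  have hbτ : ∀ l : Fin L,
      (∑ m : Fin M, (d (Sum.inl l))⁻¹ * Complex.normSq (gVec a f ψ m (Sum.inl l))) =
        σw ^ 2 * (2 * π * f) ^ 2 / (2 * Sdnorm2) := by
    intro l
    simp only [hgτ]
    rw [← Finset.mul_sum, ← Finset.mul_sum]
    have hA := (haN l).ne'
    have hg := (Complex.normSq_pos.mpr (hα l)).ne'
    simp only [hd, dP]
    field_simp
  have hbφ : ∀ l : Fin L,
      (∑ m : Fin M, (d (Sum.inr (Sum.inl l)))⁻¹ *
          Complex.normSq (gVec a f ψ m (Sum.inr (Sum.inl l)))) = σw ^ 2 / (2 * Snorm2) := by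
    intro l
    simp only [hgφ]
    rw [← Finset.mul_sum, ← Finset.mul_sum]
    have hA := (haNφ l).ne'
    have hg := (Complex.normSq_pos.mpr (hα l)).ne'
    simp only [hd, dP]
    field_simp
  have hbθ : ∀ l : Fin L,
      (∑ m : Fin M, (d (Sum.inr (Sum.inr (Sum.inl l))))⁻¹ *
          Complex.normSq (gVec a f ψ m (Sum.inr (Sum.inr (Sum.inl l))))) =
        σw ^ 2 / (2 * Snorm2) := by
    intro l
    simp only [hgθ]
    rw [← Finset.mul_sum, ← Finset.mul_sum]
    have hA := (haNθ l).ne'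
    have hg := (Complex.normSq_pos.mpr (hα l)).ne'
    simp only [hd, dP]
    field_simp
  have hbR : ∀ l : Fin L,
      (∑ m : Fin M, (d (Sum.inr (Sum.inr (Sum.inr (Sum.inl l)))))⁻¹ *
          Complex.normSq (gVec a f ψ m (Sum.inr (Sum.inr (Sum.inr (Sum.inl l)))))) =
        σw ^ 2 / (2 * Snorm2) := by
    intro l
    simp only [hgR]
    rw [← Finset.mul_sum]
    have hA := (haN l).ne'
    simp only [hd, dP]
    field_simp
  have hbI : ∀ l : Fin L,
      (∑ m : Fin M, (d (Sum.inr (Sum.inr (Sum.inr (Sum.inr l)))))⁻¹ *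
          Complex.normSq (gVec a f ψ m (Sum.inr (Sum.inr (Sum.inr (Sum.inr l)))))) =
        σw ^ 2 / (2 * Snorm2) := by
    intro l
    simp only [hgI]
    rw [← Finset.mul_sum]
    have hA := (haN l).ne'
    simp only [hd, dP]
    field_simp
  rw [Fintype.sum_sum_type, Fintype.sum_sum_type, Fintype.sum_sum_type, Fintype.sum_sum_type]
  simp only [hbτ, hbφ, hbθ, hbR, hbI, Finset.sum_const, Finset.card_univ, Fintype.card_fin,
    nsmul_eq_mul]
  rw [hSNR, hσF2]
  have hMne : (M : ℝ) ≠ 0 := Nat.cast_ne_zero.mpr hM.ne'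
  have hπ : (π : ℝ) ≠ 0 := Real.pi_ne_zero
  field_simp
  ring

end
end
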